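/- Let N be a positive integer, p a prime, and A an N × N matrix with entries in 𝔽_p. Then there exists a positive integer g with g ≤ p^N − 1 such that A^g is diagonalizable over 𝔽_p and every eigenvalue of A^g is 0 or 1; equivalently, there exists a positive integer g ≤ p^N − 1 such that A^g · (A^g − I) = 0. -/

import Mathlib

open Polynomial

/-- For any `N × N` matrix `A` over `𝔽_p`, there is a positive integer
`g ≤ p^N - 1` such that `A^g` is diagonalizable with eigenvalues in `{0, 1}`,
equivalently `A^g * (A^g - 1) = 0`. -/
theorem stmt2 (N p : ℕ) (hN : 1 ≤ N) (hp : p.Prime)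
    (A : Matrix (Fin N) (Fin N) (ZMod p)) :
    ∃ g : ℕ, 0 < g ∧ g ≤ p ^ N - 1 ∧ A ^ g * (A ^ g - 1) = 0 := by
  haveI : Fact p.Prime := ⟨hp⟩
  have hp2 : 2 ≤ p := hp.two_le
  set χ := A.charpoly with hχdef
  have hmonχ : χ.Monic := A.charpoly_monic
  have hχ0 : χ ≠ 0 := hmonχ.ne_zero
  have hdeg : χ.natDegree = N := by
    rw [hχdef, A.charpoly_natDegree_eq_dim, Fintype.card_fin]
  set r := χ.rootMultiplicity 0 with hrdef
  set q := χ /ₘ (X - C 0) ^ r with hqdef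
  have hfac : X ^ r * q = χ := by
    have h := χ.pow_mul_divByMonic_rootMultiplicity_eq 0
    simp only [map_zero, sub_zero] at h
    rw [hqdef, hrdef]
    simpa only [map_zero, sub_zero] using h
  have hq0 : q.eval 0 ≠ 0 := by
    have h := Polynomial.eval_divByMonic_pow_rootMultiplicity_ne_zero (0 : ZMod p) hχ0
    rw [hqdef, hrdef]
    exact h
  have hqne : q ≠ 0 := fun h => hq0 (by simp [h])
  have hmonq : q.Monic := by
    have : χ.leadingCoeff = q.leadingCoeff := by
      rw [← hfac, leadingCoeff_monic_mul (monic_X_pow r)]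
    unfold Polynomial.Monic
    rw [← this, hmonχ]
  have hdegsum : r + q.natDegree = N := by
    rw [← hdeg, ← hfac, natDegree_mul (pow_ne_zero r X_ne_zero) hqne, natDegree_X_pow]
  -- Cayley-Hamilton: aeval A χ = 0
  have hCH : aeval A χ = 0 := A.aeval_self_charpoly
  clear hχdef hrdef hqdef
  clear_value χ r q
  by_cases hdq : q.natDegree = 0
  · -- q = 1, χ = X^N, A is nilpotent
    have hq1 : q = 1 := hmonq.natDegree_eq_zero.mp hdq
    have hrN : r = N := by omega
    have hAN : A ^ N = 0 := by
      have : aeval A χ = A ^ N := by rw [← hfac, hq1, hrN]; simp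
      rw [this] at hCH; exact hCH
    refine ⟨N, hN, ?_, by rw [hAN]; simp⟩
    have : N < 2 ^ N := Nat.lt_two_pow_self
    have h2 : 2 ^ N ≤ p ^ N := Nat.pow_le_pow_left hp2 N
    omega
  · -- q has positive degree; work in AdjoinRoot q
    have hc0 : q.coeff 0 ≠ 0 := by rwa [coeff_zero_eq_eval_zero]
    haveI : Fintype (AdjoinRoot q) :=
      Module.fintypeOfFintype (AdjoinRoot.powerBasis hqne).basis
    have hcard : Fintype.card (AdjoinRoot q) = p ^ q.natDegree := by
      rw [Module.card_fintype (AdjoinRoot.powerBasis hqne).basis, ZMod.card,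
        Fintype.card_fin, AdjoinRoot.powerBasis_dim]
    haveI : Nontrivial (AdjoinRoot q) := by
      rw [← Fintype.one_lt_card_iff_nontrivial, hcard]
      exact Nat.one_lt_pow hdq (by omega)
    -- root q is a unit
    set x : AdjoinRoot q := AdjoinRoot.root q with hxdef
    have hxq : aeval x q = 0 := by
      rw [aeval_def, AdjoinRoot.algebraMap_eq]
      exact AdjoinRoot.eval₂_root q
    have hkey : x * (aeval x q.divX)
        = - algebraMap (ZMod p) (AdjoinRoot q) (q.coeff 0) := by
      have h := congrArg (aeval x) (X_mul_divX_add q)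
      simp only [map_add, map_mul, aeval_X, aeval_C, hxq] at h
      linear_combination h
    have hxy : x * ((- (q.coeff 0)⁻¹) • aeval x q.divX) = 1 := by
      rw [Algebra.mul_smul_comm, hkey, smul_neg, neg_smul, neg_neg,
        Algebra.smul_def, ← map_mul, inv_mul_cancel₀ hc0, map_one]
    set ux : (AdjoinRoot q)ˣ := ⟨x, _, hxy, by rw [mul_comm] at hxy; exact hxy⟩
      with huxdef
    set u := Fintype.card (AdjoinRoot q)ˣ with hudef
    have hu0 : 0 < u := Fintype.card_pos
    have hxu : x ^ u = 1 := by
      have : ux ^ u = 1 := pow_card_eq_one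
      have := congrArg (Units.val) this
      simpa using this
    have hqdvd : q ∣ X ^ u - 1 := by
      rw [← AdjoinRoot.mk_eq_zero]
      have : AdjoinRoot.mk q (X ^ u - 1) = x ^ u - 1 := by
        simp [map_sub, map_pow, AdjoinRoot.mk_X, hxdef]
      rw [this, hxu, sub_self]
    -- the exponent
    refine ⟨u * (r + 1), by positivity, ?_, ?_⟩
    · -- bound
      have hult : u < p ^ q.natDegree := by
        rw [← hcard]; exact card_units_lt (AdjoinRoot q)
      have hr1 : r + 1 ≤ p ^ r := by
        have h1 : r < 2 ^ r := Nat.lt_two_pow_self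
        have h2 : 2 ^ r ≤ p ^ r := Nat.pow_le_pow_left hp2 r
        omega
      have hpr : 1 ≤ p ^ r := Nat.one_le_pow _ _ (by omega)
      have hmul : (p ^ q.natDegree - 1) * p ^ r = p ^ N - p ^ r := by
        rw [Nat.sub_mul, one_mul, ← pow_add]
        congr 2
        omega
      have : u * (r + 1) ≤ (p ^ q.natDegree - 1) * p ^ r :=
        Nat.mul_le_mul (by omega) hr1
      omega
    · -- the algebraic identity
      have hrle : r ≤ u * (r + 1) := by nlinarith
      have hdvd1 : X ^ r ∣ (X : (ZMod p)[X]) ^ (u * (r + 1)) :=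
        pow_dvd_pow X hrle
      have hdvd2 : q ∣ (X : (ZMod p)[X]) ^ (u * (r + 1)) - 1 := by
        refine hqdvd.trans ?_
        have := sub_dvd_pow_sub_pow ((X : (ZMod p)[X]) ^ u) 1 (r + 1)
        simpa [← pow_mul] using this
      have hdvd : χ ∣ X ^ (u * (r + 1)) * (X ^ (u * (r + 1)) - 1) := by
        rw [← hfac]
        exact mul_dvd_mul hdvd1 hdvd2
      obtain ⟨c, hc⟩ := hdvd
      have := congrArg (aeval A) hc
      simpa [hCH] using this
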